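/- Let S be a connected vertex ordering of a connected graph G, and let u, v be adjacent vertices with p_S(u) < p_S(v). If either p_S(u) = 1 or v has some neighbor at a position strictly less than p_S(u), then the ordering obtained by moving v to position p_S(u) (shifting the intermediate vertices one position later) is again a connected ordering. -/

import Mathlib

open SimpleGraph

/-- First-fit coloring along a vertex sequence: each vertex in turn receives the
smallest positive integer not used on its already-colored neighbors. Uncolored
vertices have color `0`. -/
noncomputable def firstFit {V : Type*} [DecidableEq V] (G : SimpleGraph V) (l : List V) :
    V → ℕ :=
  l.foldl (fun c v => Function.update c v
    (sInf {k | 0 < k ∧ ∀ u, G.Adj v u → c u ≠ k})) (fun _ => 0)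

/-- `l` is an ordering of all vertices. -/
def IsOrdering {V : Type*} (l : List V) : Prop := l.Nodup ∧ ∀ v : V, v ∈ l

/-- `l` is a connected ordering: every vertex after the first has a neighbor earlier. -/
def IsConnectedOrdering {V : Type*} (G : SimpleGraph V) (l : List V) : Prop :=
  IsOrdering l ∧ ∀ i (hi : i < l.length), 0 < i → ∃ u ∈ l.take i, G.Adj u (l.get ⟨i, hi⟩)

/-- Number of colors used by first-fit along `l`. -/
noncomputable def numColors {V : Type*} [Fintype V] [DecidableEq V] (G : SimpleGraph V)
    (l : List V) : ℕ :=
  Finset.univ.sup (firstFit G l)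

/-- The Grundy number: maximum number of first-fit colors over all vertex orderings. -/
noncomputable def grundy {V : Type*} [Fintype V] [DecidableEq V] (G : SimpleGraph V) : ℕ :=
  sSup {k | ∃ l : List V, IsOrdering l ∧ k = numColors G l}

/-- The connected Grundy number: maximum number of first-fit colors over connected orderings. -/
noncomputable def connGrundy {V : Type*} [Fintype V] [DecidableEq V] (G : SimpleGraph V) : ℕ :=
  sSup {k | ∃ l : List V, IsConnectedOrdering G l ∧ k = numColors G l}

private lemma erase_eq_eraseIdx' {V : Type*} [DecidableEq V] :
    ∀ (l : List V) (a : V), a ∈ l → l.erase a = l.eraseIdx (l.idxOf a)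
  | b :: t, a, h => by
    by_cases hb : b = a
    · subst hb; simp
    · have hm : a ∈ t := by
        rcases List.mem_cons.1 h with h' | h'
        · exact absurd h'.symm hb
        · exact h'
      rw [List.erase_cons_tail (by simpa using hb), List.idxOf_cons_ne _ hb,
        List.eraseIdx_cons_succ, erase_eq_eraseIdx' t a hm]

theorem stmt14 {V : Type*} [DecidableEq V] (G : SimpleGraph V) (S : List V)
    (hS : IsConnectedOrdering G S) (u v : V) (huv : G.Adj u v)
    (hpos : S.idxOf u < S.idxOf v)
    (hcond : S.idxOf u = 0 ∨ ∃ w, G.Adj v w ∧ S.idxOf w < S.idxOf u) :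
    IsConnectedOrdering G ((S.erase v).insertIdx (S.idxOf u) v) := by
  obtain ⟨⟨hnd, hall⟩, hconn⟩ := hS
  set iu := S.idxOf u with hiu_def
  set iv := S.idxOf v with hiv_def
  have hv : v ∈ S := hall v
  have hu : u ∈ S := hall u
  have hivlt : iv < S.length := List.idxOf_lt_length_iff.2 hv
  have hiult : iu < S.length := List.idxOf_lt_length_iff.2 hu
  have hSu : S[iu] = u := List.getElem_idxOf hiult
  have hSv : S[iv] = v := List.getElem_idxOf hivlt
  have herase : S.erase v = S.eraseIdx iv := erase_eq_eraseIdx' S v hv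
  rw [herase]
  have hlenE : (S.eraseIdx iv).length = S.length - 1 := by
    rw [List.length_eraseIdx_of_lt hivlt]
  have hle : iu ≤ (S.eraseIdx iv).length := by omega
  set T := (S.eraseIdx iv).insertIdx iu v with hTdef
  have hlenT : T.length = S.length := by
    rw [hTdef, List.length_insertIdx_of_le_length hle, hlenE]; omega
  have hperm : T.Perm S := by
    refine (List.perm_insertIdx v _ hle).trans ?_
    rw [← herase]
    exact (List.perm_cons_erase hv).symm
  -- getElem facts for T
  have hTlow : ∀ j (h2 : j < S.length) (h1 : j < T.length), j < iu → T[j] = S[j] := by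
    intro j h2 h1 hj
    simp only [hTdef] at h1 ⊢
    rw [List.getElem_insertIdx_of_lt hj (by omega)]
    exact List.getElem_eraseIdx_of_lt (by omega) (by omega)
  have hTv : ∀ (h1 : iu < T.length), T[iu] = v := by
    intro h1
    simp only [hTdef] at h1 ⊢
    exact List.getElem_insertIdx_self h1
  have hTmid : ∀ j (h2 : j - 1 < S.length) (h1 : j < T.length), iu < j → j ≤ iv →
      T[j] = S[j - 1] := by
    intro j h2 h1 hj1 hj2
    simp only [hTdef] at h1 ⊢
    have e : iu + (j - 1 - iu) = j - 1 := by omega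
    have hb : iu + (j - 1 - iu) < (S.eraseIdx iv).length := by omega
    have := List.getElem_insertIdx_add_succ (S.eraseIdx iv) v iu (j - 1 - iu) hb
      (by rw [List.length_insertIdx_of_le_length hle]; omega)
    simp only [e] at this
    have e2 : j - 1 + 1 = j := by omega
    simp only [e2] at this
    rw [this]
    exact List.getElem_eraseIdx_of_lt (by omega) (by omega)
  have hThigh : ∀ j (h2 : j < S.length) (h1 : j < T.length), iv < j → T[j] = S[j] := by
    intro j h2 h1 hj
    simp only [hTdef] at h1 ⊢
    have e : iu + (j - 1 - iu) = j - 1 := by omega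
    have hb : iu + (j - 1 - iu) < (S.eraseIdx iv).length := by omega
    have := List.getElem_insertIdx_add_succ (S.eraseIdx iv) v iu (j - 1 - iu) hb
      (by rw [List.length_insertIdx_of_le_length hle]; omega)
    simp only [e] at this
    have e2 : j - 1 + 1 = j := by omega
    simp only [e2] at this
    rw [this]
    have := List.getElem_eraseIdx_of_ge (l := S) (i := iv) (j := j - 1) (by omega) (by omega)
    simp only [e2] at this
    exact this
  refine ⟨⟨hperm.nodup_iff.2 hnd, fun x => hperm.mem_iff.2 (hall x)⟩, ?_⟩
  intro i hi hipos
  have hiS : i < S.length := by omega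
  simp only [List.get_eq_getElem]
  -- helper to extract from S.take membership
  rcases lt_trichotomy i iu with h | h | h
  · -- i < iu : same as in S
    rw [hTlow i hiS hi h]
    obtain ⟨w, hw, hadj⟩ := hconn i hiS hipos
    obtain ⟨j, hm, rfl⟩ := List.mem_take_iff_getElem.1 hw
    refine ⟨S[j]'(by omega), ?_, by simpa using hadj⟩
    rw [← hTlow j (by omega) (by omega) (by omega)]
    exact List.mem_take_iff_getElem.2 ⟨j, by omega, rfl⟩
  · -- i = iu : vertex is v, use hcond
    subst h
    rw [hTv hi]
    rcases hcond with h0 | ⟨w, hadj, hwlt⟩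
    · omega
    · have hwS : w ∈ S := hall w
      have hwlen : S.idxOf w < S.length := List.idxOf_lt_length_iff.2 hwS
      refine ⟨w, ?_, hadj.symm⟩
      have hgw : S[S.idxOf w] = w := List.getElem_idxOf hwlen
      have : T[S.idxOf w]'(by omega) = w := by
        rw [hTlow _ (by omega) (by omega) (by omega)]; exact hgw
      rw [← this]
      exact List.mem_take_iff_getElem.2 ⟨S.idxOf w, by omega, rfl⟩
  · -- iu < i
    by_cases hcase : i ≤ iv
    · -- vertex is S[i-1]
      rw [hTmid i (by omega) hi h hcase]
      by_cases h1 : i = iu + 1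
      · -- vertex is u; v is earlier
        refine ⟨v, ?_, ?_⟩
        · have : T[iu]'(by omega) = v := hTv (by omega)
          rw [← this]
          exact List.mem_take_iff_getElem.2 ⟨iu, by omega, rfl⟩
        · have : S[i-1]'(by omega) = u := by
            have e : i - 1 = iu := by omega
            simp only [e]; exact hSu
          rw [this]; exact huv.symm
      · -- use S-connectivity at i-1
        obtain ⟨w, hw, hadj⟩ := hconn (i-1) (by omega) (by omega)
        obtain ⟨j, hm, rfl⟩ := List.mem_take_iff_getElem.1 hw
        have hadj' : G.Adj (S[j]'(by omega)) (S[i-1]'(by omega)) := by simpa using hadj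
        by_cases hj : j < iu
        · refine ⟨S[j]'(by omega), ?_, hadj'⟩
          rw [← hTlow j (by omega) (by omega) hj]
          exact List.mem_take_iff_getElem.2 ⟨j, by omega, rfl⟩
        · refine ⟨S[j]'(by omega), ?_, hadj'⟩
          have : T[j+1]'(by omega) = S[j]'(by omega) := by
            have := hTmid (j+1) (by omega) (by omega) (by omega) (by omega)
            simpa using this
          rw [← this]
          exact List.mem_take_iff_getElem.2 ⟨j+1, by omega, rfl⟩
    · -- i > iv : vertex is S[i]
      rw [hThigh i hiS hi (by omega)]
      obtain ⟨w, hw, hadj⟩ := hconn i hiS hipos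
      obtain ⟨j, hm, rfl⟩ := List.mem_take_iff_getElem.1 hw
      have hadj' : G.Adj (S[j]'(by omega)) (S[i]'(by omega)) := by simpa using hadj
      by_cases hj : j < iu
      · refine ⟨S[j]'(by omega), ?_, hadj'⟩
        rw [← hTlow j (by omega) (by omega) hj]
        exact List.mem_take_iff_getElem.2 ⟨j, by omega, rfl⟩
      · by_cases hj2 : j = iv
        · -- w = v, located at position iu in T
          refine ⟨S[j]'(by omega), ?_, hadj'⟩
          have : T[iu]'(by omega) = S[j]'(by omega) := by
            rw [hTv (by omega)]; subst hj2; exact hSv.symm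
          rw [← this]
          exact List.mem_take_iff_getElem.2 ⟨iu, by omega, rfl⟩
        · by_cases hj3 : j < iv
          · refine ⟨S[j]'(by omega), ?_, hadj'⟩
            have : T[j+1]'(by omega) = S[j]'(by omega) := by
              have := hTmid (j+1) (by omega) (by omega) (by omega) (by omega)
              simpa using this
            rw [← this]
            exact List.mem_take_iff_getElem.2 ⟨j+1, by omega, rfl⟩
          · refine ⟨S[j]'(by omega), ?_, hadj'⟩
            rw [← hThigh j (by omega) (by omega) (by omega)]
            exact List.mem_take_iff_getElem.2 ⟨j, by omega, rfl⟩
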